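/- Let I = [0, 3π/4] and let ω = (ω₁, ω₂) be real-analytic on an open neighborhood of I with values in ℝ². Assume ω is weakly nondegenerate, i.e. for every (c₁, c₂) ∈ ℝ² \ {(0,0)}, the function φ ↦ c₁ω₁(φ) + c₂ω₂(φ) is not identically zero on I. Then there exist β > 0 and an integer μ₀ ≥ 1 such that for all φ ∈ I and all k ∈ ℤ² \ {0}: max_{0 ≤ μ ≤ μ₀} |(d/dφ)^μ (k·ω(φ))| ≥ β ‖k‖. -/

import Mathlib

open Real
open scoped RealInnerProductSpace

noncomputable section

abbrev E2 := EuclideanSpace ℝ (Fin 2)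

/-- The point of `ℝ²` (with the Euclidean norm) associated to an integer vector `k ∈ ℤ²`. -/
noncomputable def kv (k : Fin 2 → ℤ) : E2 :=
  EuclideanSpace.single 0 (k 0 : ℝ) + EuclideanSpace.single 1 (k 1 : ℝ)

lemma analyticOnNhd_iteratedDeriv' {U : Set ℝ} {ω : ℝ → E2} (hω : AnalyticOnNhd ℝ ω U) (n : ℕ) :
    AnalyticOnNhd ℝ (iteratedDeriv n ω) U := by
  induction n with
  | zero => simpa using hω
  | succ n ih => rw [iteratedDeriv_succ]; exact ih.deriv

lemma inner_iteratedDeriv' {U : Set ℝ} (hU : IsOpen U) {ω : ℝ → E2} (hω : AnalyticOnNhd ℝ ω U)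
    (c : E2) (n : ℕ) : ∀ x ∈ U,
    iteratedDeriv n (fun t => ⟪c, ω t⟫) x = ⟪c, iteratedDeriv n ω x⟫ := by
  induction n with
  | zero => intro x hx; simp
  | succ n ih =>
    intro x hx
    rw [iteratedDeriv_succ, iteratedDeriv_succ]
    have hev : iteratedDeriv n (fun t => ⟪c, ω t⟫) =ᶠ[nhds x]
        fun t => ⟪c, iteratedDeriv n ω t⟫ := by
      filter_upwards [hU.mem_nhds hx] with t ht using ih t ht
    rw [hev.deriv_eq]
    have hd : HasDerivAt (iteratedDeriv n ω) (deriv (iteratedDeriv n ω) x) x :=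
      ((analyticOnNhd_iteratedDeriv' hω n x hx).differentiableAt).hasDerivAt
    exact (((innerSL ℝ c).hasFDerivAt.comp_hasDerivAt x hd)).deriv

lemma eventually_zero_of_iteratedDeriv_zero' {f : ℝ → ℝ} {x : ℝ}
    (hf : AnalyticAt ℝ f x) (h : ∀ n, iteratedDeriv n f x = 0) :
    f =ᶠ[nhds x] 0 := by
  obtain ⟨p, hp⟩ := hf
  obtain ⟨r, hr⟩ := hp
  have hball : Metric.eball x r ∈ nhds x := EMetric.ball_mem_nhds x hr.r_pos
  filter_upwards [hball] with z hz
  have hy : z - x ∈ Metric.eball (0 : ℝ) r := by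
    simpa [edist_eq_enorm_sub, Metric.mem_eball] using hz
  have hs := hr.hasSum_iteratedFDeriv hy
  have hzero : ∀ n : ℕ, (n.factorial : ℝ)⁻¹ • iteratedFDeriv ℝ n f x (fun _ => z - x) = 0 := by
    intro n
    have : iteratedFDeriv ℝ n f x (fun _ => z - x) =
        (∏ _i : Fin n, (z - x)) • iteratedFDeriv ℝ n f x (fun _ => 1) := by
      rw [← ContinuousMultilinearMap.map_smul_univ]
      simp
    rw [this, ← iteratedDeriv_eq_iteratedFDeriv, h n]
    simp
  have : f (x + (z - x)) = 0 := by
    have h0 : HasSum (fun n : ℕ =>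
        (n.factorial : ℝ)⁻¹ • iteratedFDeriv ℝ n f x (fun _ => z - x)) 0 := by
      simp only [hzero]; exact hasSum_zero
    exact (h0.unique hs).symm
  simpa using this

lemma continuousOn_finset_sup'' {ι : Type*} {X : Type*} [TopologicalSpace X]
    (s : Finset ι) (hs : s.Nonempty) {f : ι → X → ℝ} {t : Set X}
    (h : ∀ i ∈ s, ContinuousOn (f i) t) :
    ContinuousOn (fun p => s.sup' hs (fun i => f i p)) t := by
  classical
  induction s using Finset.cons_induction with
  | empty => exact absurd hs (by simp)
  | cons a u ha ih =>
    rcases u.eq_empty_or_nonempty with rfl | hu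
    · simpa using h a (by simp)
    · simp only [Finset.sup'_cons hu]
      exact (h a (Finset.mem_cons_self a u)).sup'
        (ih hu fun j hj => h j (Finset.mem_cons_of_mem hj))

/-- If `ω` is real-analytic on a neighborhood of `I = [0, 3π/4]` and weakly nondegenerate,
then there are `β > 0` and an integer `μ₀ ≥ 1` such that for every `φ ∈ I` and every
`k ∈ ℤ² \ {0}`, some derivative `(d/dφ)^μ (k·ω(φ))` with `0 ≤ μ ≤ μ₀` has absolute value
at least `β‖k‖`. -/
theorem stmt12 (U : Set ℝ) (hU : IsOpen U)
    (hIU : Set.Icc (0 : ℝ) (3 * π / 4) ⊆ U)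
    (ω : ℝ → E2) (hω : AnalyticOnNhd ℝ ω U)
    (hnd : ∀ c : E2, c ≠ 0 →
      ∃ φ ∈ Set.Icc (0 : ℝ) (3 * π / 4), ⟪c, ω φ⟫ ≠ 0) :
    ∃ β : ℝ, 0 < β ∧ ∃ μ₀ : ℕ, 1 ≤ μ₀ ∧
      ∀ φ ∈ Set.Icc (0 : ℝ) (3 * π / 4), ∀ k : Fin 2 → ℤ, k ≠ 0 →
        ∃ μ : ℕ, μ ≤ μ₀ ∧
          β * ‖kv k‖ ≤ |iteratedDeriv μ (fun t => ⟪kv k, ω t⟫) φ| := by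
  set I : Set ℝ := Set.Icc (0 : ℝ) (3 * π / 4) with hI
  have hIne : (0 : ℝ) ∈ I := by
    refine ⟨le_refl 0, by positivity⟩
  -- key pointwise fact: for nonzero c and φ in I, some derivative of ⟪c, ω⟫ is nonzero
  have key : ∀ c : E2, c ≠ 0 → ∀ φ ∈ I, ∃ n : ℕ, ⟪c, iteratedDeriv n ω φ⟫ ≠ 0 := by
    intro c hc φ hφ
    by_contra hall
    push_neg at hall
    set f : ℝ → ℝ := fun t => ⟪c, ω t⟫ with hf
    have hfan : AnalyticOnNhd ℝ f U := fun x hx => ((innerSL ℝ c).analyticAt _).comp (hω x hx)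
    have hφU : φ ∈ U := hIU hφ
    have hder : ∀ n, iteratedDeriv n f φ = 0 := by
      intro n
      rw [inner_iteratedDeriv' hU hω c n φ hφU]
      exact hall n
    have hev : f =ᶠ[nhds φ] 0 :=
      eventually_zero_of_iteratedDeriv_zero' (hfan φ hφU) hder
    set V : Set ℝ := connectedComponentIn U φ with hV
    have hVU : V ⊆ U := connectedComponentIn_subset U φ
    have hEq : Set.EqOn f 0 V :=
      (hfan.mono hVU).eqOn_zero_of_preconnected_of_eventuallyEq_zero
        isPreconnected_connectedComponentIn (mem_connectedComponentIn hφU) hev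
    have hIV : I ⊆ V := isPreconnected_Icc.subset_connectedComponentIn hφ hIU
    obtain ⟨ψ, hψ, hne⟩ := hnd c hc
    exact hne (hEq (hIV hψ))
  -- compactness
  set K : Set (E2 × ℝ) := Metric.sphere (0 : E2) 1 ×ˢ I with hK
  have hKcomp : IsCompact K := (isCompact_sphere _ _).prod isCompact_Icc
  have hKsub : K ⊆ Set.univ ×ˢ U := fun p hp => ⟨trivial, hIU hp.2⟩
  have hUopen : IsOpen (Set.univ ×ˢ U : Set (E2 × ℝ)) := isOpen_univ.prod hU
  have hcontn : ∀ n : ℕ, ContinuousOn (fun p : E2 × ℝ => ⟪p.1, iteratedDeriv n ω p.2⟫)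
      (Set.univ ×ˢ U) := by
    intro n
    exact ContinuousOn.inner continuous_fst.continuousOn
      (((analyticOnNhd_iteratedDeriv' hω n).continuousOn).comp continuous_snd.continuousOn
        (fun p hp => hp.2))
  set V : ℕ → Set (E2 × ℝ) := fun n => (Set.univ ×ˢ U) ∩
      (fun p : E2 × ℝ => ⟪p.1, iteratedDeriv n ω p.2⟫) ⁻¹' {(0 : ℝ)}ᶜ with hVdef
  have hVopen : ∀ n, IsOpen (V n) := fun n =>
    (hcontn n).isOpen_inter_preimage hUopen isOpen_compl_singleton
  have hcover : K ⊆ ⋃ n, V n := by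
    intro p hp
    have hc : p.1 ≠ 0 := by
      have := hp.1
      simp only [Metric.mem_sphere, dist_zero_right] at this
      intro h0; rw [h0] at this; simp at this
    obtain ⟨n, hn⟩ := key p.1 hc p.2 hp.2
    exact Set.mem_iUnion.mpr ⟨n, ⟨⟨trivial, hIU hp.2⟩, hn⟩⟩
  obtain ⟨s, hs⟩ := hKcomp.elim_finite_subcover V hVopen hcover
  set μ₀ : ℕ := s.sup id + 1 with hμ₀
  have hKey : ∀ p ∈ K, ∃ μ ≤ μ₀, ⟪p.1, iteratedDeriv μ ω p.2⟫ ≠ 0 := by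
    intro p hp
    obtain ⟨n, hns, hpn⟩ := Set.mem_iUnion₂.mp (hs hp)
    exact ⟨n, le_trans (Finset.le_sup (f := id) hns) (Nat.le_succ _), hpn.2⟩
  have hrne : (Finset.range (μ₀ + 1)).Nonempty := ⟨0, by simp⟩
  set G : E2 × ℝ → ℝ := fun p =>
    (Finset.range (μ₀ + 1)).sup' hrne (fun μ => |⟪p.1, iteratedDeriv μ ω p.2⟫|) with hG
  have hGcont : ContinuousOn G (Set.univ ×ˢ U) :=
    continuousOn_finset_sup'' _ hrne (fun i _ => (hcontn i).abs)
  have hGpos : ∀ p ∈ K, 0 < G p := by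
    intro p hp
    obtain ⟨μ, hμle, hμne⟩ := hKey p hp
    have : |⟪p.1, iteratedDeriv μ ω p.2⟫| ≤ G p := by
      simp only [hG]
      exact Finset.le_sup' (fun μ => |⟪p.1, iteratedDeriv μ ω p.2⟫|) (Finset.mem_range.mpr (Nat.lt_succ_of_le hμle))
    exact lt_of_lt_of_le (abs_pos.mpr hμne) this
  have hKne : K.Nonempty := by
    refine ⟨(EuclideanSpace.single 0 (1 : ℝ), 0), ?_, hIne⟩
    simp [EuclideanSpace.norm_single]
  obtain ⟨pm, hpmK, hpmmin⟩ := hKcomp.exists_isMinOn hKne (hGcont.mono hKsub)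
  refine ⟨G pm, hGpos pm hpmK, μ₀, Nat.le_add_left 1 _, ?_⟩
  intro φ hφ k hk
  have hkv : kv k ≠ 0 := by
    intro h0
    apply hk
    have h00 : (kv k) 0 = 0 := by rw [h0]; rfl
    have h01 : (kv k) 1 = 0 := by rw [h0]; rfl
    simp only [kv, PiLp.add_apply, EuclideanSpace.single_apply] at h00 h01
    norm_num at h00 h01
    funext i
    fin_cases i
    · exact_mod_cast h00
    · exact_mod_cast h01
  have hr : (0 : ℝ) < ‖kv k‖ := norm_pos_iff.mpr hkv
  set c : E2 := ‖kv k‖⁻¹ • kv k with hc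
  have hcs : c ∈ Metric.sphere (0 : E2) 1 := by
    simp only [Metric.mem_sphere, dist_zero_right, hc, norm_smul, norm_inv, norm_norm]
    exact inv_mul_cancel₀ hr.ne'
  have hpK : (c, φ) ∈ K := ⟨hcs, hφ⟩
  have hle : G pm ≤ G (c, φ) := hpmmin hpK
  obtain ⟨μ, hμmem, hμeq⟩ := Finset.exists_mem_eq_sup' hrne
    (fun μ => |⟪c, iteratedDeriv μ ω φ⟫|)
  refine ⟨μ, Nat.lt_succ_iff.mp (Finset.mem_range.mp hμmem), ?_⟩
  have h1 : G pm ≤ |⟪c, iteratedDeriv μ ω φ⟫| := by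
    rw [← hμeq]; exact hle
  have h2 : ⟪c, iteratedDeriv μ ω φ⟫ = ‖kv k‖⁻¹ * ⟪kv k, iteratedDeriv μ ω φ⟫ :=
    real_inner_smul_left _ _ _
  rw [inner_iteratedDeriv' hU hω (kv k) μ φ (hIU hφ)]
  rw [h2, abs_mul, abs_inv, abs_norm] at h1
  calc G pm * ‖kv k‖ ≤ (‖kv k‖⁻¹ * |⟪kv k, iteratedDeriv μ ω φ⟫|) * ‖kv k‖ := by
        exact mul_le_mul_of_nonneg_right h1 hr.le
    _ = |⟪kv k, iteratedDeriv μ ω φ⟫| := by field_simp
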